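/- If p^V is the Dirichlet heat kernel of the cone V (given by the Bessel series) and β = 1 + α¹ + n/2, then for fixed x, y ∈ V, t^{β/2} p^V(t, x, √t y) → (v(x) v(y)/(2^{α¹} Γ(1+α¹))) e^{-|y|²/2} as t → ∞. -/

import Mathlib

open Filter

/-- The modified Bessel function of the first kind of order `ν`. -/
noncomputable def besselI (ν z : ℝ) : ℝ :=
  ∑' k : ℕ, (z / 2) ^ (ν + 2 * (k : ℝ)) / ((Nat.factorial k : ℝ) * Real.Gamma (ν + k + 1))

/-- The Dirichlet heat kernel of a cone with vertex `0`, in polar coordinates. -/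
noncomputable def conePV (n : ℕ) {D : Type*} (α : ℕ → ℝ) (m : ℕ → D → ℝ)
    (t r ρ : ℝ) (θ ω : D) : ℝ :=
  (1 / t) * (r * ρ) ^ (-((n : ℝ) / 2 - 1)) * Real.exp (-(r ^ 2 + ρ ^ 2) / (2 * t)) *
    ∑' i : ℕ, besselI (α i) (r * ρ / t) * m i θ * m i ω

/-- The entire part of the Bessel series. -/
noncomputable def Gfun (ν w : ℝ) : ℝ :=
  ∑' k : ℕ, w ^ k / ((Nat.factorial k : ℝ) * Real.Gamma (ν + k + 1))

lemma gammaAux_pos (ν : ℝ) (hν : 0 ≤ ν) (k : ℕ) : 0 < Real.Gamma (ν + k + 1) :=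
  Real.Gamma_pos_of_pos (by positivity)

lemma gammaAux_le (ν : ℝ) (hν : 0 ≤ ν) (k : ℕ) :
    Real.Gamma (ν + 1) ≤ Real.Gamma (ν + k + 1) := by
  induction k with
  | zero => simp
  | succ k ih =>
    have h1 : Real.Gamma (ν + (k + 1 : ℕ) + 1) = (ν + k + 1) * Real.Gamma (ν + k + 1) := by
      have := Real.Gamma_add_one (s := ν + k + 1) (by positivity)
      push_cast
      rw [show ν + ((k : ℝ) + 1) + 1 = (ν + k + 1) + 1 by ring, this]
    rw [h1]
    calc Real.Gamma (ν + 1) ≤ Real.Gamma (ν + k + 1) := ih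
      _ ≤ (ν + k + 1) * Real.Gamma (ν + k + 1) := by
          nlinarith [gammaAux_pos ν hν k]

lemma Gfun_term_le (ν : ℝ) (hν : 0 ≤ ν) (w : ℝ) (hw : 0 ≤ w) (k : ℕ) :
    w ^ k / ((Nat.factorial k : ℝ) * Real.Gamma (ν + k + 1)) ≤
      w ^ k / (Nat.factorial k : ℝ) * (Real.Gamma (ν + 1))⁻¹ := by
  rw [div_mul_eq_div_div, div_eq_mul_inv]
  refine mul_le_mul_of_nonneg_left ?_ (by positivity)
  exact inv_anti₀ (Real.Gamma_pos_of_pos (by positivity)) (gammaAux_le ν hν k)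

lemma Gfun_summable (ν : ℝ) (hν : 0 ≤ ν) (w : ℝ) (hw : 0 ≤ w) :
    Summable (fun k : ℕ => w ^ k / ((Nat.factorial k : ℝ) * Real.Gamma (ν + k + 1))) := by
  apply Summable.of_nonneg_of_le (fun k => by positivity) (Gfun_term_le ν hν w hw)
  exact (Real.summable_pow_div_factorial w).mul_right _

lemma exp_tsum (w : ℝ) : (∑' k : ℕ, w ^ k / (Nat.factorial k : ℝ)) = Real.exp w := by
  rw [Real.exp_eq_exp_ℝ, NormedSpace.exp_eq_tsum_div]

lemma Gfun_nonneg (ν w : ℝ) (hν : 0 ≤ ν) (hw : 0 ≤ w) : 0 ≤ Gfun ν w :=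
  tsum_nonneg fun k => by positivity

lemma Gfun_le (ν : ℝ) (hν : 0 ≤ ν) (w : ℝ) (hw : 0 ≤ w) :
    Gfun ν w ≤ Real.exp w / Real.Gamma (ν + 1) := by
  have h := Summable.tsum_le_tsum (Gfun_term_le ν hν w hw) (Gfun_summable ν hν w hw)
    ((Real.summable_pow_div_factorial w).mul_right _)
  rw [tsum_mul_right, exp_tsum] at h
  rw [div_eq_mul_inv]
  exact h

lemma le_Gfun (ν : ℝ) (hν : 0 ≤ ν) (w : ℝ) (hw : 0 ≤ w) :
    1 / Real.Gamma (ν + 1) ≤ Gfun ν w := by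
  have h := Summable.le_tsum (Gfun_summable ν hν w hw) 0 (fun j _ => by positivity)
  simpa [Gfun] using h

lemma besselI_eq (ν z : ℝ) (hz : 0 < z) :
    besselI ν z = (z / 2) ^ ν * Gfun ν (z ^ 2 / 4) := by
  unfold besselI Gfun
  rw [← tsum_mul_left]
  apply tsum_congr
  intro k
  have hz2 : (0:ℝ) < z / 2 := by linarith
  have h1 : (z / 2) ^ (ν + 2 * (k : ℝ)) = (z / 2) ^ ν * (z ^ 2 / 4) ^ k := by
    rw [Real.rpow_add hz2, show (2 * (k : ℝ)) = ((2 * k : ℕ) : ℝ) by push_cast; ring,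
      Real.rpow_natCast, pow_mul]
    congr 2
    ring
  rw [h1, mul_div_assoc]

lemma exp_limit (r ρ : ℝ) :
    Tendsto (fun t : ℝ => Real.exp (-(r^2 + t*ρ^2)/(2*t))) atTop (nhds (Real.exp (-ρ^2/2))) := by
  have h1 : Tendsto (fun t : ℝ => -r^2/2 * t⁻¹ + -ρ^2/2) atTop (nhds (-ρ^2/2)) := by
    have h := (tendsto_inv_atTop_zero (𝕜 := ℝ)).const_mul (-r^2/2)
    have h2 := h.add_const (-ρ^2/2)
    simpa using h2
  have h2 : (fun t : ℝ => -r^2/2 * t⁻¹ + -ρ^2/2) =ᶠ[atTop]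
      (fun t : ℝ => -(r^2 + t*ρ^2)/(2*t)) := by
    filter_upwards [eventually_gt_atTop (0:ℝ)] with t ht
    field_simp
    ring
  exact (Real.continuous_exp.tendsto _).comp (h1.congr' h2)

lemma w_limit (A : ℝ) : Tendsto (fun t : ℝ => A/(4*t)) atTop (nhds 0) := by
  have h := (tendsto_inv_atTop_zero (𝕜 := ℝ)).const_mul (A/4)
  rw [mul_zero] at h
  refine h.congr' ?_
  filter_upwards [eventually_gt_atTop (0:ℝ)] with t ht
  field_simp

lemma Gfun_limit (ν : ℝ) (hν : 0 ≤ ν) (A : ℝ) (hA : 0 ≤ A) :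
    Tendsto (fun t : ℝ => Gfun ν (A/(4*t))) atTop (nhds (1/Real.Gamma (ν+1))) := by
  have hupper : Tendsto (fun t : ℝ => Real.exp (A/(4*t)) / Real.Gamma (ν+1)) atTop
      (nhds (1/Real.Gamma (ν+1))) := by
    have := ((Real.continuous_exp.tendsto _).comp (w_limit A)).div_const (Real.Gamma (ν+1))
    simpa using this
  refine tendsto_of_tendsto_of_tendsto_of_le_of_le' (tendsto_const_nhds) hupper ?_ ?_
  · filter_upwards [eventually_gt_atTop (0:ℝ)] with t ht
    exact le_Gfun ν hν _ (by positivity)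
  · filter_upwards [eventually_gt_atTop (0:ℝ)] with t ht
    exact Gfun_le ν hν _ (by positivity)

lemma pow_algebra (s r ρ c ai a0 β : ℝ) (hs : 0 < s) (hr : 0 < r) (hρ : 0 < ρ)
    (hβ : β = 1 + a0 + (c + 1)) :
    (s^2) ^ (β/2) * (1/(s^2)) * (r*(s*ρ)) ^ (-c) * (r*(s*ρ)/(s^2)/2) ^ ai
      = (s^2) ^ ((a0-ai)/2) * ((r*ρ) ^ (ai-c) / 2 ^ ai) := by
  have hs0 := hs.le
  have hsq : ∀ x : ℝ, ((s^2:ℝ)) ^ x = s ^ (2*x) := fun x => by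
    rw [← Real.rpow_natCast s 2, ← Real.rpow_mul hs0]; norm_num
  have h1 : (1:ℝ)/(s^2) = s ^ ((-2:ℝ)) := by
    rw [Real.rpow_neg hs0, ← Real.rpow_natCast s 2]
    norm_num
  have h2 : (r*(s*ρ)) ^ (-c) = r ^ (-c) * s ^ (-c) * ρ ^ (-c) := by
    rw [Real.mul_rpow hr.le (by positivity), Real.mul_rpow hs0 hρ.le]; ring
  have h3 : r*(s*ρ)/(s^2)/2 = r * ρ * s⁻¹ * 2⁻¹ := by field_simp
  have h4 : (r * ρ * s⁻¹ * 2⁻¹ : ℝ) ^ ai = r ^ ai * ρ ^ ai * s ^ (-ai) * ((2:ℝ) ^ ai)⁻¹ := by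
    rw [Real.mul_rpow (by positivity) (by positivity),
        Real.mul_rpow (by positivity) (by positivity),
        Real.mul_rpow hr.le hρ.le,
        Real.inv_rpow hs0, Real.inv_rpow (by norm_num : (0:ℝ) ≤ 2),
        ← Real.rpow_neg hs0]
  have h5 : (r*ρ:ℝ) ^ (ai - c) = r ^ (ai-c) * ρ ^ (ai-c) := Real.mul_rpow hr.le hρ.le
  have hsc : s ^ (2*(β/2)) * s ^ ((-2:ℝ)) * s ^ (-c) * s ^ (-ai) = s ^ (2*((a0-ai)/2)) := by
    rw [← Real.rpow_add hs, ← Real.rpow_add hs, ← Real.rpow_add hs]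
    congr 1; rw [hβ]; ring
  have hrc : r ^ (-c) * r ^ ai = r ^ (ai - c) := by
    rw [← Real.rpow_add hr]; congr 1; ring
  have hρc : ρ ^ (-c) * ρ ^ ai = ρ ^ (ai - c) := by
    rw [← Real.rpow_add hρ]; congr 1; ring
  rw [hsq, hsq, h1, h2, h3, h4, h5]
  calc s ^ (2*(β/2)) * s ^ ((-2:ℝ)) * (r ^ (-c) * s ^ (-c) * ρ ^ (-c)) *
        (r ^ ai * ρ ^ ai * s ^ (-ai) * ((2:ℝ) ^ ai)⁻¹)
      = (s ^ (2*(β/2)) * s ^ ((-2:ℝ)) * s ^ (-c) * s ^ (-ai)) *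
        ((r ^ (-c) * r ^ ai) * ((ρ ^ (-c) * ρ ^ ai) * ((2:ℝ) ^ ai)⁻¹)) := by ring
    _ = _ := by rw [hsc, hrc, hρc]; ring

set_option maxHeartbeats 1000000 in
/-- with `β = 1 + α¹ + n/2`, for fixed `x = rθ`, `y = ρω` in the cone,
`t^{β/2} p^V(t, x, √t y) → (v(x)v(y)/(2^{α¹} Γ(1+α¹))) e^{-|y|²/2}` as `t → ∞`. -/
theorem cone_heat_kernel_yaglom {D : Type*} (n : ℕ) (hn : 1 ≤ n)
    (lam : ℕ → ℝ) (m : ℕ → D → ℝ) (α : ℕ → ℝ)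
    (hα : ∀ i, α i = Real.sqrt (lam i + ((n : ℝ) / 2 - 1) ^ 2))
    (hlam0 : 0 < lam 0) (hlam01 : lam 0 < lam 1) (hlammono : Monotone lam)
    (hmbdd : ∃ Cm : ℝ, ∀ i θ, |m i θ| ≤ Cm)
    (hsum : ∀ r ρ : ℝ, 0 < r → 0 < ρ →
      Summable (fun i : ℕ =>
        (r * ρ) ^ (α i - ((n : ℝ) / 2 - 1)) / (2 ^ (α i) * Real.Gamma (1 + α i))))
    (hser : ∀ t r ρ : ℝ, 0 < t → 0 < r → 0 < ρ → ∀ θ ω : D,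
      Summable (fun i : ℕ => besselI (α i) (r * ρ / t) * m i θ * m i ω))
    (β : ℝ) (hβ : β = 1 + α 0 + (n : ℝ) / 2)
    (r ρ : ℝ) (θ ω : D) (hr : 0 < r) (hρ : 0 < ρ) :
    Tendsto (fun t : ℝ => t ^ (β / 2) * conePV n α m t r (Real.sqrt t * ρ) θ ω) atTop
      (nhds ((r ^ (α 0 - ((n : ℝ) / 2 - 1)) * m 0 θ) *
          (ρ ^ (α 0 - ((n : ℝ) / 2 - 1)) * m 0 ω) / (2 ^ (α 0) * Real.Gamma (1 + α 0)) *
        Real.exp (-ρ ^ 2 / 2))) := by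
  obtain ⟨Cm, hCm⟩ := hmbdd
  have hCm0 : 0 ≤ Cm := le_trans (abs_nonneg _) (hCm 0 θ)
  set c : ℝ := (n : ℝ) / 2 - 1 with hc
  have hαnn : ∀ i, 0 ≤ α i := fun i => (hα i) ▸ Real.sqrt_nonneg _
  have hα0le : ∀ i, α 0 ≤ α i := by
    intro i
    rw [hα 0, hα i]
    exact Real.sqrt_le_sqrt (by have := hlammono (Nat.zero_le i); linarith)
  have hα0lt : ∀ i, i ≠ 0 → α 0 < α i := by
    intro i hi
    rw [hα 0, hα i]
    apply Real.sqrt_lt_sqrt (by positivity)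
    have : lam 1 ≤ lam i := hlammono (Nat.one_le_iff_ne_zero.mpr hi)
    linarith
  have hΓpos : ∀ i, 0 < Real.Gamma (α i + 1) :=
    fun i => Real.Gamma_pos_of_pos (by have := hαnn i; linarith)
  have hβ' : β = 1 + α 0 + (c + 1) := by rw [hβ, hc]; ring
  have hbsum : Summable (fun i : ℕ =>
      (r * ρ) ^ (α i - c) / (2 ^ (α i) * Real.Gamma (1 + α i)) *
        (Real.exp ((r*ρ)^2/4) * (Cm*Cm))) :=
    (hsum r ρ hr hρ).mul_right _
  have hlim : ∀ i : ℕ, Tendsto (fun t : ℝ =>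
      t ^ ((α 0 - α i)/2) * ((r*ρ) ^ (α i - c) / 2 ^ (α i)) *
        Real.exp (-(r^2 + t*ρ^2)/(2*t)) * Gfun (α i) ((r*ρ)^2/(4*t)) * (m i θ * m i ω))
      atTop (nhds ((if i = 0 then (1:ℝ) else 0) * ((r*ρ) ^ (α i - c) / 2 ^ (α i)) *
        Real.exp (-ρ^2/2) * (1/Real.Gamma (α i + 1)) * (m i θ * m i ω))) := by
    intro i
    have hT1 : Tendsto (fun t : ℝ => t ^ ((α 0 - α i)/2)) atTop
        (nhds (if i = 0 then (1:ℝ) else 0)) := by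
      by_cases hi : i = 0
      · subst hi
        simp only [sub_self, zero_div, Real.rpow_zero, if_pos]
        exact tendsto_const_nhds
      · rw [if_neg hi]
        have h2 := tendsto_rpow_neg_atTop (y := (α i - α 0)/2)
          (by have := hα0lt i hi; linarith)
        rw [show -((α i - α 0)/2) = (α 0 - α i)/2 by ring] at h2
        exact h2
    exact (((hT1.mul_const ((r*ρ) ^ (α i - c) / 2 ^ (α i))).mul (exp_limit r ρ)).mul
      (Gfun_limit (α i) (hαnn i) ((r*ρ)^2) (by positivity))).mul_const (m i θ * m i ω)
  have hbound : ∀ᶠ t : ℝ in atTop, ∀ i : ℕ,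
      ‖t ^ ((α 0 - α i)/2) * ((r*ρ) ^ (α i - c) / 2 ^ (α i)) *
        Real.exp (-(r^2 + t*ρ^2)/(2*t)) * Gfun (α i) ((r*ρ)^2/(4*t)) * (m i θ * m i ω)‖ ≤
      (r * ρ) ^ (α i - c) / (2 ^ (α i) * Real.Gamma (1 + α i)) *
        (Real.exp ((r*ρ)^2/4) * (Cm*Cm)) := by
    filter_upwards [eventually_ge_atTop (1:ℝ)] with t ht i
    have ht0 : (0:ℝ) < t := lt_of_lt_of_le one_pos ht
    have hC : (0:ℝ) ≤ (r*ρ) ^ (α i - c) / 2 ^ (α i) := by positivity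
    have hP : |t ^ ((α 0 - α i)/2)| ≤ 1 := by
      rw [abs_of_nonneg (Real.rpow_nonneg ht0.le _)]
      exact Real.rpow_le_one_of_one_le_of_nonpos ht (by have := hα0le i; linarith)
    have hE : |Real.exp (-(r^2 + t*ρ^2)/(2*t))| ≤ 1 := by
      rw [abs_of_nonneg (Real.exp_nonneg _), Real.exp_le_one_iff]
      apply div_nonpos_of_nonpos_of_nonneg
      · nlinarith
      · linarith
    have hwle : (r*ρ)^2/(4*t) ≤ (r*ρ)^2/4 :=
      div_le_div_of_nonneg_left (by positivity) (by norm_num) (by linarith)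
    have hG : |Gfun (α i) ((r*ρ)^2/(4*t))| ≤ Real.exp ((r*ρ)^2/4) / Real.Gamma (α i + 1) := by
      rw [abs_of_nonneg (Gfun_nonneg _ _ (hαnn i) (by positivity))]
      refine le_trans (Gfun_le (α i) (hαnn i) _ (by positivity)) ?_
      exact (div_le_div_iff_of_pos_right (hΓpos i)).mpr (Real.exp_le_exp.mpr hwle)
    have hM : |m i θ * m i ω| ≤ Cm * Cm := by
      rw [abs_mul]
      exact mul_le_mul (hCm i θ) (hCm i ω) (abs_nonneg _) hCm0
    have hΓ1 : (0:ℝ) < Real.Gamma (1 + α i) := by rw [add_comm]; exact hΓpos i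
    rw [Real.norm_eq_abs, abs_mul, abs_mul, abs_mul, abs_mul]
    calc |t ^ ((α 0 - α i)/2)| * |(r*ρ) ^ (α i - c) / 2 ^ (α i)| *
          |Real.exp (-(r^2 + t*ρ^2)/(2*t))| * |Gfun (α i) ((r*ρ)^2/(4*t))| * |m i θ * m i ω|
        ≤ 1 * ((r*ρ) ^ (α i - c) / 2 ^ (α i)) * 1 *
            (Real.exp ((r*ρ)^2/4) / Real.Gamma (α i + 1)) * (Cm * Cm) := by
          have hX : 0 ≤ Real.exp ((r*ρ)^2/4) / Real.Gamma (α i + 1) :=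
            (div_pos (Real.exp_pos _) (hΓpos i)).le
          apply mul_le_mul _ hM (abs_nonneg _)
            (mul_nonneg (mul_nonneg (mul_nonneg zero_le_one hC) zero_le_one) hX)
          apply mul_le_mul _ hG (abs_nonneg _)
            (mul_nonneg (mul_nonneg zero_le_one hC) zero_le_one)
          apply mul_le_mul _ hE (abs_nonneg _) (mul_nonneg zero_le_one hC)
          rw [abs_of_nonneg hC]
          exact mul_le_mul_of_nonneg_right hP hC
      _ = (r * ρ) ^ (α i - c) / (2 ^ (α i) * Real.Gamma (1 + α i)) *
            (Real.exp ((r*ρ)^2/4) * (Cm*Cm)) := by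
          rw [add_comm 1 (α i)]
          have h2 : ((2:ℝ) ^ (α i)) ≠ 0 := (Real.rpow_pos_of_pos two_pos _).ne'
          field_simp
  have main := tendsto_tsum_of_dominated_convergence hbsum hlim hbound
  have hval : (∑' i : ℕ, (if i = 0 then (1:ℝ) else 0) * ((r*ρ) ^ (α i - c) / 2 ^ (α i)) *
        Real.exp (-ρ^2/2) * (1/Real.Gamma (α i + 1)) * (m i θ * m i ω)) =
      (r ^ (α 0 - c) * m 0 θ) * (ρ ^ (α 0 - c) * m 0 ω) /
        (2 ^ (α 0) * Real.Gamma (1 + α 0)) * Real.exp (-ρ ^ 2 / 2) := by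
    rw [tsum_eq_single 0 (fun b hb => by simp [if_neg hb])]
    simp only [if_pos]
    rw [Real.mul_rpow hr.le hρ.le, add_comm (α 0) 1]
    have h2 : ((2:ℝ) ^ (α 0)) ≠ 0 := (Real.rpow_pos_of_pos two_pos _).ne'
    have hΓ : Real.Gamma (1 + α 0) ≠ 0 :=
      (Real.Gamma_pos_of_pos (by have := hαnn 0; linarith)).ne'
    field_simp
  rw [hval] at main
  refine main.congr' ?_
  filter_upwards [eventually_ge_atTop (1:ℝ)] with t ht
  have ht0 : (0:ℝ) < t := lt_of_lt_of_le one_pos ht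
  simp only [conePV]
  rw [← tsum_mul_left, ← tsum_mul_left]
  apply tsum_congr
  intro i
  set s := Real.sqrt t with hsdef
  have hs : 0 < s := Real.sqrt_pos.mpr ht0
  have hts : t = s^2 := by rw [hsdef, Real.sq_sqrt ht0.le]
  have hz : 0 < r * (s * ρ) / t := by positivity
  rw [besselI_eq _ _ hz, hts]
  have hEa : (s*ρ)^2 = s^2*ρ^2 := by ring
  have hGa : (r*(s*ρ)/(s^2))^2/4 = (r*ρ)^2/(4*(s^2)) := by
    field_simp
  rw [hEa, hGa]
  have key := pow_algebra s r ρ c (α i) (α 0) β hs hr hρ hβ'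
  linear_combination (Real.exp (-(r^2 + s^2*ρ^2)/(2*(s^2))) *
    Gfun (α i) ((r*ρ)^2/(4*(s^2))) * (m i θ * m i ω)) * key.symm
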